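/- Let λ be a partition with at most n parts and write δ_n = (n−1, n−2, …, 1, 0). (1) If the integers λ_i + n − i (1 ≤ i ≤ n) are not all of the same parity, then ∫ s_λ(x_1,…,x_n) = 0. (2) If λ = 2π + δ_n componentwise for a partition π (padded with zeros), then ∫ s_λ(x_1,…,x_n) = (−1)^{n(n−1)/2} · 2^{n−1} · s_π(x_1²,…,x_n²). (3) If λ = 2π + δ_n + (1,1,…,1) componentwise for a partition π, then ∫ s_λ(x_1,…,x_n) = (−1)^{n(n−1)/2} · 2^{n−1} · (x_1⋯x_n) · s_π(x_1²,…,x_n²). -/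
import Mathlib


open MvPolynomial Finset

noncomputable section

abbrev Rn (n : ℕ) : Type := MvPolynomial (Fin n) ℚ
abbrev Kn (n : ℕ) : Type := FractionRing (Rn n)

/-- The canonical map from `R = ℚ[x_1,…,x_n]` to its fraction field. -/
def toK {n : ℕ} (f : Rn n) : Kn n := algebraMap (Rn n) (Kn n) f

/-- The action of a sign vector `σ ∈ {±1}^n` (encoded by `σ : Fin n → Bool`,
with `true ↦ −1` and `false ↦ +1`) on `R`, by `x_i ↦ σ_i x_i`. -/
def sgnAct {n : ℕ} (σ : Fin n → Bool) : Rn n →ₐ[ℚ] Rn n :=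
  aeval (fun i => if σ i then -X i else X i)

/-- The subgroup `K ⊂ {±1}^n` of sign vectors with `σ_1⋯σ_n = 1`, as a finite set. -/
def evenSigns (n : ℕ) : Finset (Fin n → Bool) :=
  univ.filter (fun σ => (∏ i : Fin n, (if σ i then (-1 : ℤ) else 1)) = 1)

/-- `𝔯 = (−1)^D ∏_{i<j} (x_i + x_j)` where `D = n(n−1)/2` (type `D_n`). -/
def frakrD (n : ℕ) : Rn n :=
  ((-1 : ℚ) ^ (n * (n - 1) / 2)) •
    ∏ p ∈ univ.filter (fun p : Fin n × Fin n => p.1 < p.2), (X p.1 + X p.2)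

/-- `∫f = Σ_{σ∈K} σ(f/𝔯)`, computed in the fraction field using
`σ(f/𝔯) = σ(f)/σ(𝔯)`. -/
def intD (n : ℕ) (f : Rn n) : Kn n :=
  ∑ σ ∈ evenSigns n, toK (sgnAct σ f) / toK (sgnAct σ (frakrD n))

/-- `η = 2^{−N}(x_1+⋯+x_n)^N` where `N = n(n−1)/2 + 1`. -/
def etaD (n : ℕ) : Rn n :=
  (((2 : ℚ) ^ (n * (n - 1) / 2 + 1))⁻¹) • (∑ i : Fin n, X i) ^ (n * (n - 1) / 2 + 1)

/-- `∂f = (1/2) Σ_i ∂f/∂x_i`. -/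
def pdD {n : ℕ} (f : Rn n) : Rn n := (1 / 2 : ℚ) • ∑ i : Fin n, pderiv i f

/-- `∇(f) = ∫(η·∂f)`. -/
def nablaD (n : ℕ) (f : Rn n) : Kn n := intD n (etaD n * pdD f)

/-- `Pf = x_1 x_2 ⋯ x_n`. -/
def Pf (n : ℕ) : Rn n := ∏ i : Fin n, X i

/-- The invariant ring `R^{W(D_n)} = ℚ[p_1^{(2)},…,p_{n−1}^{(2)}, Pf]`,
where `p_k^{(2)} = Σ_i x_i^{2k}`. -/
def algD (n : ℕ) : Subalgebra ℚ (Rn n) :=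
  Algebra.adjoin ℚ
    ((Set.range (fun k : Fin (n - 1) => ∑ i : Fin n, X i ^ (2 * ((k : ℕ) + 1)))) ∪ {Pf n})

/-- The ideal `I ⊂ R^{W(D_n)}` of elements with zero constant term. -/
def augD (n : ℕ) : Ideal ↥(algD n) :=
  RingHom.ker ((constantCoeff : Rn n →+* ℚ).comp (algD n).val.toRingHom)

/-- The alternant `a_α(y) = Σ_{ρ∈S_r} sgn(ρ) ∏_i y_{ρ(i)}^{α_i}`. -/
def alt {n : ℕ} (r : ℕ) (α : Fin r → ℕ) (y : Fin r → Rn n) : Rn n :=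
  ∑ ρ : Equiv.Perm (Fin r), ((Equiv.Perm.sign ρ : ℤ)) • ∏ i, y (ρ i) ^ (α i)

/-- The Schur polynomial `s_λ(y) = a_{λ+δ_r}(y)/a_{δ_r}(y)` as an element of the
fraction field. -/
def schurK {n : ℕ} (r : ℕ) (lam : Fin r → ℕ) (y : Fin r → Rn n) : Kn n :=
  toK (alt r (fun i => lam i + (r - 1 - (i : ℕ))) y) /
    toK (alt r (fun i => r - 1 - (i : ℕ)) y)

namespace Stmt7

lemma prod_pairs {n : ℕ} {M : Type*} [CommMonoid M] (f : Fin n → Fin n → M) :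
    ∏ p ∈ univ.filter (fun p : Fin n × Fin n => p.1 < p.2), f p.1 p.2
      = ∏ i : Fin n, ∏ j ∈ Ioi i, f i j := by
  rw [← Finset.prod_sigma univ (fun i => Ioi i) (fun p => f p.1 p.2)]
  refine Finset.prod_bij' (fun p _ => ⟨p.1, p.2⟩) (fun x _ => (x.1, x.2)) ?_ ?_ ?_ ?_ ?_
  · intro p hp
    simp only [Finset.mem_filter, Finset.mem_univ, true_and] at hp
    simp [Finset.mem_sigma, Finset.mem_Ioi, hp]
  · intro x hx
    simp only [Finset.mem_sigma, Finset.mem_univ, Finset.mem_Ioi, true_and] at hx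
    simp [Finset.mem_filter, hx]
  · intro p hp; rfl
  · intro x hx; rfl
  · intro p hp; rfl

lemma val_rev {n : ℕ} (i : Fin n) : ((Fin.rev i : Fin n) : ℕ) = n - 1 - (i : ℕ) := by
  have : ((Fin.rev i : Fin n) : ℕ) = n - ((i : ℕ) + 1) := rfl
  omega

/-- The alternant of the staircase is the sign of the reversal times the Vandermonde product. -/
lemma alt_delta {n : ℕ} (y : Fin n → Rn n) :
    alt n (fun i => n - 1 - (i : ℕ)) y
      = ((Equiv.Perm.sign (Fin.revPerm : Equiv.Perm (Fin n)) : ℤ)) •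
          ∏ i : Fin n, ∏ j ∈ Ioi i, (y j - y i) := by
  rw [← Matrix.det_vandermonde y, Matrix.det_apply, Finset.smul_sum]
  rw [← Equiv.sum_comp (Equiv.mulRight (Fin.revPerm : Equiv.Perm (Fin n)))
      (fun σ => (Equiv.Perm.sign (Fin.revPerm : Equiv.Perm (Fin n)) : ℤ) •
        (Equiv.Perm.sign σ • ∏ i, (Matrix.vandermonde y) (σ i) i))]
  unfold alt
  refine Finset.sum_congr rfl ?_
  intro ρ _
  simp only [Equiv.coe_mulRight, Matrix.vandermonde_apply]
  have hsign : Equiv.Perm.sign (ρ * Fin.revPerm) =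
      Equiv.Perm.sign ρ * Equiv.Perm.sign (Fin.revPerm : Equiv.Perm (Fin n)) := by
    simp [map_mul]
  rw [hsign]
  have hprod : ∏ i : Fin n, y ((ρ * (Fin.revPerm : Equiv.Perm (Fin n))) i) ^ (i : ℕ)
      = ∏ i : Fin n, y (ρ i) ^ (n - 1 - (i : ℕ)) := by
    rw [← Equiv.prod_comp (Fin.revPerm : Equiv.Perm (Fin n))
      (fun i => y ((ρ * (Fin.revPerm : Equiv.Perm (Fin n))) i) ^ (i : ℕ))]
    refine Finset.prod_congr rfl ?_
    intro i _
    simp only [Equiv.Perm.coe_mul, Function.comp_apply, Fin.revPerm_apply, Fin.rev_rev]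
    rw [val_rev]
  rw [hprod]
  -- now both sides: sign ρ • ∏ ... = signRev • ((sign ρ * signRev) • ∏ ...)
  have key : ∀ (u v : ℤˣ) (x : Rn n), (u : ℤ) • ((v * u) • x) = (v : ℤ) • x := by
    intro u v x
    rw [Units.smul_def, smul_smul]
    rcases Int.units_eq_one_or u with h | h <;> rcases Int.units_eq_one_or v with h' | h' <;>
      simp [h, h']
  exact (key _ _ _).symm


lemma sgnAct_X {n : ℕ} (σ : Fin n → Bool) (i : Fin n) :
    sgnAct σ (X i) = C (if σ i then (-1 : ℚ) else 1) * X i := by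
  simp only [sgnAct, aeval_X]
  split <;> simp [neg_mul]

lemma sgnAct_sgnAct {n : ℕ} (σ : Fin n → Bool) (f : Rn n) :
    sgnAct σ (sgnAct σ f) = f := by
  have h : (sgnAct σ).comp (sgnAct σ) = AlgHom.id ℚ (Rn n) := by
    apply MvPolynomial.algHom_ext
    intro i
    simp only [AlgHom.comp_apply, sgnAct, aeval_X, AlgHom.id_apply]
    split <;> rename_i h <;> simp [h]
  calc sgnAct σ (sgnAct σ f) = ((sgnAct σ).comp (sgnAct σ)) f := rfl
    _ = f := by rw [h]; rfl

lemma sgnAct_injective {n : ℕ} (σ : Fin n → Bool) :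
    Function.Injective (sgnAct σ : Rn n →ₐ[ℚ] Rn n) := by
  intro f g h
  rw [← sgnAct_sgnAct σ f, h, sgnAct_sgnAct]

lemma sgnAct_Xsq {n : ℕ} (σ : Fin n → Bool) (i : Fin n) :
    sgnAct σ (X i ^ 2) = X i ^ 2 := by
  simp only [map_pow, sgnAct, aeval_X]
  split <;> ring

/-- sgnAct fixes any alternant in the squares of the variables. -/
lemma sgnAct_alt_sq {n : ℕ} (σ : Fin n → Bool) (β : Fin n → ℕ) :
    sgnAct σ (alt n β (fun i => X i ^ 2)) = alt n β (fun i => X i ^ 2) := by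
  unfold alt
  rw [map_sum]
  refine Finset.sum_congr rfl ?_
  intro ρ _
  rw [map_zsmul, map_prod]
  congr 1
  refine Finset.prod_congr rfl ?_
  intro i _
  rw [map_pow, sgnAct_Xsq]

/-- Character-sum over the even-sign subgroup. -/
def charSum (n : ℕ) (e : Fin n → ℕ) : ℚ :=
  ∑ σ ∈ evenSigns n, ∏ j : Fin n, (if σ j then (-1 : ℚ) else 1) ^ (e j)

lemma prod_signs_eq {n : ℕ} (σ : Fin n → Bool) :
    (∏ i : Fin n, (if σ i then (-1 : ℤ) else 1)) = 1 ∨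
    (∏ i : Fin n, (if σ i then (-1 : ℤ) else 1)) = -1 := by
  refine Finset.prod_induction _ (fun x => x = 1 ∨ x = -1) ?_ (by left; rfl) ?_
  · rintro a b (rfl | rfl) (rfl | rfl) <;> norm_num
  · intro i _; split <;> simp

lemma card_evenSigns {n : ℕ} (hn : 1 ≤ n) : (evenSigns n).card = 2 ^ (n - 1) := by
  classical
  have i0 : Fin n := ⟨0, hn⟩
  set P : (Fin n → Bool) → Prop := fun σ => (∏ i : Fin n, (if σ i then (-1 : ℤ) else 1)) = 1
  have hsplit : (univ.filter P).card + (univ.filter (fun σ => ¬ P σ)).card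
      = Fintype.card (Fin n → Bool) := by
    rw [Finset.card_filter_add_card_filter_not]
    rfl
  have hflip : ∀ (σ : Fin n → Bool),
      (∏ i : Fin n, (if Function.update σ i0 (!σ i0) i then (-1 : ℤ) else 1))
        = - ∏ i : Fin n, (if σ i then (-1 : ℤ) else 1) := by
    intro σ
    have : ∀ i : Fin n, (if Function.update σ i0 (!σ i0) i then (-1 : ℤ) else 1)
        = (if i = i0 then (-1 : ℤ) else 1) * (if σ i then (-1 : ℤ) else 1) := by
      intro i
      rcases eq_or_ne i i0 with rfl | h
      · simp [Function.update_self]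
        cases σ i <;> simp
      · simp [Function.update_of_ne h, h]
    rw [Finset.prod_congr rfl (fun i _ => this i), Finset.prod_mul_distrib]
    simp [Finset.prod_ite_eq' univ i0 (fun _ => (-1 : ℤ))]
  have hcards : (univ.filter P).card = (univ.filter (fun σ => ¬ P σ)).card := by
    refine Finset.card_bij' (fun σ _ => Function.update σ i0 (!σ i0))
      (fun σ _ => Function.update σ i0 (!σ i0)) ?_ ?_ ?_ ?_
    · intro σ hσ
      simp only [Finset.mem_filter, Finset.mem_univ, true_and, P] at hσ ⊢
      rw [hflip, hσ]; norm_num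
    · intro σ hσ
      simp only [Finset.mem_filter, Finset.mem_univ, true_and, P] at hσ ⊢
      rcases prod_signs_eq σ with h | h
      · exact absurd h hσ
      · rw [hflip, h]; norm_num
    · intro σ _
      funext i
      rcases eq_or_ne i i0 with rfl | h
      · simp
      · simp [Function.update_of_ne h]
    · intro σ _
      funext i
      rcases eq_or_ne i i0 with rfl | h
      · simp
      · simp [Function.update_of_ne h]
  have h2n : Fintype.card (Fin n → Bool) = 2 ^ n := by
    simp [Fintype.card_fun]
  have : 2 * (univ.filter P).card = 2 ^ n := by omega
  have hn' : 2 ^ n = 2 * 2 ^ (n - 1) := by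
    conv_lhs => rw [show n = (n - 1) + 1 by omega]
    rw [pow_succ]; ring
  have : (evenSigns n).card = (univ.filter P).card := rfl
  omega


lemma pm_pow_even {e : ℕ} (he : e % 2 = 0) (b : Bool) :
    (if b then (-1 : ℚ) else 1) ^ e = 1 := by
  cases b
  · simp
  · simp [Even.neg_one_pow (Nat.even_iff.mpr he)]

lemma pm_pow_odd {e : ℕ} (he : e % 2 = 1) (b : Bool) :
    (if b then (-1 : ℚ) else 1) ^ e = (if b then (-1 : ℚ) else 1) := by
  cases b
  · simp
  · simp [Odd.neg_one_pow (Nat.odd_iff.mpr he)]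

lemma charSum_even {n : ℕ} (hn : 1 ≤ n) (e : Fin n → ℕ) (he : ∀ j, e j % 2 = 0) :
    charSum n e = 2 ^ (n - 1) := by
  unfold charSum
  have : ∀ σ ∈ evenSigns n, (∏ j : Fin n, (if σ j then (-1 : ℚ) else 1) ^ (e j)) = 1 := by
    intro σ _
    exact Finset.prod_eq_one (fun j _ => pm_pow_even (he j) (σ j))
  rw [Finset.sum_congr rfl this, Finset.sum_const, card_evenSigns hn]
  simp

lemma charSum_odd {n : ℕ} (hn : 1 ≤ n) (e : Fin n → ℕ) (he : ∀ j, e j % 2 = 1) :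
    charSum n e = 2 ^ (n - 1) := by
  unfold charSum
  have : ∀ σ ∈ evenSigns n, (∏ j : Fin n, (if σ j then (-1 : ℚ) else 1) ^ (e j)) = 1 := by
    intro σ hσ
    rw [Finset.prod_congr rfl (fun j _ => pm_pow_odd (he j) (σ j))]
    simp only [evenSigns, Finset.mem_filter, Finset.mem_univ, true_and] at hσ
    calc ∏ j : Fin n, (if σ j then (-1 : ℚ) else 1)
        = ((∏ i : Fin n, (if σ i then (-1 : ℤ) else 1) : ℤ) : ℚ) := by
          rw [Int.cast_prod]
          exact Finset.prod_congr rfl (fun j _ => by split <;> simp)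
      _ = 1 := by rw [hσ]; norm_num
  rw [Finset.sum_congr rfl this, Finset.sum_const, card_evenSigns hn]
  simp

def flip2 {n : ℕ} (i0 j0 : Fin n) (σ : Fin n → Bool) : Fin n → Bool :=
  Function.update (Function.update σ i0 (!σ i0)) j0 (!σ j0)

lemma flip2_at_j0 {n : ℕ} {i0 j0 : Fin n} (σ : Fin n → Bool) :
    flip2 i0 j0 σ j0 = !σ j0 := by simp [flip2]

lemma flip2_at_i0 {n : ℕ} {i0 j0 : Fin n} (hij : i0 ≠ j0) (σ : Fin n → Bool) :
    flip2 i0 j0 σ i0 = !σ i0 := by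
  simp [flip2, Function.update_of_ne hij]

lemma flip2_at_other {n : ℕ} {i0 j0 i : Fin n} (hi0 : i ≠ i0) (hj0 : i ≠ j0)
    (σ : Fin n → Bool) : flip2 i0 j0 σ i = σ i := by
  simp [flip2, Function.update_of_ne hj0, Function.update_of_ne hi0]

lemma flip2_flip2 {n : ℕ} {i0 j0 : Fin n} (hij : i0 ≠ j0) (σ : Fin n → Bool) :
    flip2 i0 j0 (flip2 i0 j0 σ) = σ := by
  funext i
  rcases eq_or_ne i j0 with h | hj0
  · subst h
    rw [flip2_at_j0, flip2_at_j0, Bool.not_not]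
  rcases eq_or_ne i i0 with h | hi0
  · subst h
    rw [flip2_at_i0 hij, flip2_at_i0 hij, Bool.not_not]
  · rw [flip2_at_other hi0 hj0, flip2_at_other hi0 hj0]

lemma flip2_mem {n : ℕ} {i0 j0 : Fin n} (hij : i0 ≠ j0) (σ : Fin n → Bool)
    (hσ : σ ∈ evenSigns n) : flip2 i0 j0 σ ∈ evenSigns n := by
  simp only [evenSigns, Finset.mem_filter, Finset.mem_univ, true_and] at hσ ⊢
  have hval : ∀ i : Fin n, (if flip2 i0 j0 σ i then (-1 : ℤ) else 1)
      = ((if i = i0 then (-1 : ℤ) else 1) * (if i = j0 then (-1 : ℤ) else 1))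
          * (if σ i then (-1 : ℤ) else 1) := by
    intro i
    rcases eq_or_ne i j0 with h | hj0
    · subst h
      rw [flip2_at_j0]
      cases σ i <;> simp [hij.symm]
    rcases eq_or_ne i i0 with h | hi0
    · subst h
      rw [flip2_at_i0 hij]
      cases σ i <;> simp [hj0]
    · rw [flip2_at_other hi0 hj0]
      simp [hi0, hj0]
  rw [Finset.prod_congr rfl (fun i _ => hval i), Finset.prod_mul_distrib,
    Finset.prod_mul_distrib]
  rw [Finset.prod_ite_eq' univ i0 (fun _ => (-1 : ℤ)),
    Finset.prod_ite_eq' univ j0 (fun _ => (-1 : ℤ)), hσ]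
  simp

lemma charSum_mixed {n : ℕ} (e : Fin n → ℕ) (i0 j0 : Fin n)
    (hi : e i0 % 2 = 1) (hj : e j0 % 2 = 0) :
    charSum n e = 0 := by
  classical
  have hij : i0 ≠ j0 := by intro h; rw [h] at hi; omega
  unfold charSum
  have hneg : ∀ σ : Fin n → Bool,
      (∏ j : Fin n, (if flip2 i0 j0 σ j then (-1 : ℚ) else 1) ^ (e j))
        = - ∏ j : Fin n, (if σ j then (-1 : ℚ) else 1) ^ (e j) := by
    intro σ
    have hval : ∀ i : Fin n, (if flip2 i0 j0 σ i then (-1 : ℚ) else 1) ^ (e i)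
        = (if i = i0 then (-1 : ℚ) else 1) * (if σ i then (-1 : ℚ) else 1) ^ (e i) := by
      intro i
      rcases eq_or_ne i j0 with h | hj0
      · subst h
        rw [flip2_at_j0, pm_pow_even hj, pm_pow_even hj]
        simp [hij.symm]
      rcases eq_or_ne i i0 with h | hi0
      · subst h
        rw [flip2_at_i0 hij, pm_pow_odd hi, pm_pow_odd hi]
        cases σ i <;> simp
      · rw [flip2_at_other hi0 hj0]
        simp [hi0]
    rw [Finset.prod_congr rfl (fun i _ => hval i), Finset.prod_mul_distrib,
      Finset.prod_ite_eq' univ i0 (fun _ => (-1 : ℚ))]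
    simp
  refine Finset.sum_involution (fun σ _ => flip2 i0 j0 σ) ?_ ?_ ?_ ?_
  · intro σ _
    show (∏ j : Fin n, (if σ j then (-1 : ℚ) else 1) ^ (e j))
      + (∏ j : Fin n, (if flip2 i0 j0 σ j then (-1 : ℚ) else 1) ^ (e j)) = 0
    rw [hneg]; ring
  · intro σ _ _ hcontra
    have : flip2 i0 j0 σ i0 = σ i0 := congrFun hcontra i0
    rw [flip2_at_i0 hij] at this
    exact (Bool.not_ne_self (σ i0)) this
  · intro σ hσ
    exact flip2_mem hij σ hσ
  · intro σ _
    exact flip2_flip2 hij σ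


lemma toK_injective {n : ℕ} : Function.Injective (toK (n := n)) :=
  IsFractionRing.injective (Rn n) (Kn n)

lemma toK_ne_zero {n : ℕ} {f : Rn n} (hf : f ≠ 0) : toK f ≠ 0 := by
  intro h
  exact hf (toK_injective (by rw [h]; exact (map_zero (algebraMap (Rn n) (Kn n))).symm))

lemma toK_mul {n : ℕ} (a b : Rn n) : toK (a * b) = toK a * toK b :=
  map_mul (algebraMap (Rn n) (Kn n)) a b

lemma toK_sum {n : ℕ} {ι : Type*} (t : Finset ι) (g : ι → Rn n) :
    toK (∑ i ∈ t, g i) = ∑ i ∈ t, toK (g i) :=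
  map_sum (algebraMap (Rn n) (Kn n)) g t

lemma X_sub_ne_zero {n : ℕ} {i j : Fin n} (h : j ≠ i) : (X j - X i : Rn n) ≠ 0 :=
  sub_ne_zero_of_ne (fun hc => h (MvPolynomial.X_injective hc))

lemma X_sq_sub_ne_zero {n : ℕ} {i j : Fin n} (h : j ≠ i) :
    (X j ^ 2 - X i ^ 2 : Rn n) ≠ 0 := by
  have hfac : (X j ^ 2 - X i ^ 2 : Rn n) = (X j - X i) * (X j + X i) := by ring
  rw [hfac]
  refine mul_ne_zero (X_sub_ne_zero h) ?_
  intro hc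
  have := congrArg (MvPolynomial.eval (fun _ : Fin n => (1 : ℚ))) hc
  simp at this

lemma smul_sign_ne_zero {n : ℕ} (u : ℤˣ) {x : Rn n} (hx : x ≠ 0) :
    ((u : ℤ) • x) ≠ 0 := by
  rcases Int.units_eq_one_or u with h | h <;> rw [h] <;> simpa

lemma alt_delta_ne_zero {n : ℕ} :
    alt n (fun i => n - 1 - (i : ℕ)) (fun i : Fin n => X i) ≠ 0 := by
  rw [alt_delta]
  refine smul_sign_ne_zero _ ?_
  rw [Finset.prod_ne_zero_iff]
  intro i _
  rw [Finset.prod_ne_zero_iff]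
  intro j hj
  exact X_sub_ne_zero (ne_of_gt (Finset.mem_Ioi.mp hj))

lemma alt_delta_sq_ne_zero {n : ℕ} :
    alt n (fun i => n - 1 - (i : ℕ)) (fun i : Fin n => X i ^ 2) ≠ 0 := by
  rw [alt_delta]
  refine smul_sign_ne_zero _ ?_
  rw [Finset.prod_ne_zero_iff]
  intro i _
  rw [Finset.prod_ne_zero_iff]
  intro j hj
  exact X_sq_sub_ne_zero (ne_of_gt (Finset.mem_Ioi.mp hj))

lemma sgnAct_alt_expand {n : ℕ} (σ : Fin n → Bool) (α : Fin n → ℕ) :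
    sgnAct σ (alt n α (fun i => X i)) =
      ∑ ρ : Equiv.Perm (Fin n), ((Equiv.Perm.sign ρ : ℤ)) •
        (C (∏ j : Fin n, (if σ j then (-1 : ℚ) else 1) ^ (α (ρ.symm j))) *
          ∏ i, X (ρ i) ^ (α i)) := by
  unfold alt
  rw [map_sum]
  refine Finset.sum_congr rfl ?_
  intro ρ _
  rw [map_zsmul, map_prod]
  congr 1
  have hfac : ∀ i : Fin n, sgnAct σ (X (ρ i) ^ α i)
      = C ((if σ (ρ i) then (-1 : ℚ) else 1) ^ (α i)) * X (ρ i) ^ (α i) := by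
    intro i
    rw [map_pow, sgnAct_X, mul_pow, ← map_pow]
  rw [Finset.prod_congr rfl (fun i _ => hfac i), Finset.prod_mul_distrib, ← map_prod]
  congr 2
  rw [← Equiv.prod_comp ρ (fun j => (if σ j then (-1 : ℚ) else 1) ^ (α (ρ.symm j)))]
  exact Finset.prod_congr rfl (fun i _ => by rw [Equiv.symm_apply_apply])

lemma sum_sgnAct_alt {n : ℕ} (α : Fin n → ℕ) :
    ∑ σ ∈ evenSigns n, sgnAct σ (alt n α (fun i => X i))
      = ∑ ρ : Equiv.Perm (Fin n), ((Equiv.Perm.sign ρ : ℤ)) •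
          (C (charSum n (fun j => α (ρ.symm j))) * ∏ i, X (ρ i) ^ (α i)) := by
  rw [Finset.sum_congr rfl (fun σ _ => sgnAct_alt_expand σ α), Finset.sum_comm]
  refine Finset.sum_congr rfl ?_
  intro ρ _
  rw [← Finset.smul_sum]
  congr 1
  rw [← Finset.sum_mul, ← map_sum]
  rfl

/-- The main reduction: `∫s` for a Schur polynomial `s_λ`. -/
lemma intD_eq {n : ℕ} (lam : Fin n → ℕ) (s : Rn n)
    (hs : toK s = schurK n lam (fun i => X i)) :
    intD n s =
      toK (∑ ρ : Equiv.Perm (Fin n), ((Equiv.Perm.sign ρ : ℤ)) •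
          (C (charSum n (fun j => lam (ρ.symm j) + (n - 1 - ((ρ.symm j : Fin n) : ℕ)))) *
            ∏ i, X (ρ i) ^ (lam i + (n - 1 - (i : ℕ)))))
        / toK (((-1 : ℚ) ^ (n * (n - 1) / 2)) •
            alt n (fun i => n - 1 - (i : ℕ)) (fun i => X i ^ 2)) := by
  set δf : Fin n → ℕ := fun i => n - 1 - (i : ℕ) with hδf
  set α : Fin n → ℕ := fun i => lam i + δf i with hα
  set Aδ : Rn n := alt n δf (fun i => X i) with hAδdef
  set Aα : Rn n := alt n α (fun i => X i) with hAαdef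
  set A2 : Rn n := alt n δf (fun i => X i ^ 2) with hA2def
  have hAδ : Aδ ≠ 0 := alt_delta_ne_zero
  have hsA : s * Aδ = Aα := by
    apply toK_injective
    rw [toK_mul, hs]
    unfold schurK
    rw [div_mul_cancel₀ _ (toK_ne_zero hAδ)]
  have hfrak : frakrD n * Aδ = ((-1 : ℚ) ^ (n * (n - 1) / 2)) • A2 := by
    unfold frakrD
    rw [smul_mul_assoc]
    congr 1
    rw [prod_pairs (fun i j => (X i + X j : Rn n))]
    rw [hAδdef, hA2def, alt_delta, alt_delta, mul_smul_comm]
    congr 1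
    rw [← Finset.prod_mul_distrib]
    refine Finset.prod_congr rfl ?_
    intro i _
    rw [← Finset.prod_mul_distrib]
    refine Finset.prod_congr rfl ?_
    intro j _
    ring
  have hterm : ∀ σ : Fin n → Bool,
      toK (sgnAct σ s) / toK (sgnAct σ (frakrD n))
        = toK (sgnAct σ Aα)
            / toK (((-1 : ℚ) ^ (n * (n - 1) / 2)) • A2) := by
    intro σ
    have hAδσ : toK (sgnAct σ Aδ) ≠ 0 :=
      toK_ne_zero (fun h0 => hAδ (sgnAct_injective σ (by rw [h0, map_zero])))
    rw [← mul_div_mul_right (toK (sgnAct σ s)) (toK (sgnAct σ (frakrD n))) hAδσ]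
    rw [← toK_mul, ← toK_mul, ← map_mul (sgnAct σ), ← map_mul (sgnAct σ), hsA, hfrak]
    have hinv : sgnAct σ (((-1 : ℚ) ^ (n * (n - 1) / 2)) • A2)
        = ((-1 : ℚ) ^ (n * (n - 1) / 2)) • A2 := by
      rw [map_smul, hA2def, sgnAct_alt_sq]
    rw [hinv]
  unfold intD
  rw [Finset.sum_congr rfl (fun σ _ => hterm σ), ← Finset.sum_div, ← toK_sum]
  rw [hAαdef, sum_sgnAct_alt]


lemma numer_even {n : ℕ} (hn : 1 ≤ n) (α β : Fin n → ℕ) (hab : ∀ i, α i = 2 * β i) :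
    (∑ ρ : Equiv.Perm (Fin n), ((Equiv.Perm.sign ρ : ℤ)) •
        (C (charSum n (fun j => α (ρ.symm j))) * ∏ i, X (ρ i) ^ (α i)) : Rn n)
      = C ((2 : ℚ) ^ (n - 1)) * alt n β (fun i => X i ^ 2) := by
  unfold alt
  rw [Finset.mul_sum]
  refine Finset.sum_congr rfl ?_
  intro ρ _
  rw [charSum_even hn _ (fun j => by rw [hab]; omega)]
  rw [mul_smul_comm]
  congr 2
  refine Finset.prod_congr rfl ?_
  intro i _
  rw [hab, pow_mul]

lemma numer_odd {n : ℕ} (hn : 1 ≤ n) (α β : Fin n → ℕ) (hab : ∀ i, α i = 2 * β i + 1) :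
    (∑ ρ : Equiv.Perm (Fin n), ((Equiv.Perm.sign ρ : ℤ)) •
        (C (charSum n (fun j => α (ρ.symm j))) * ∏ i, X (ρ i) ^ (α i)) : Rn n)
      = C ((2 : ℚ) ^ (n - 1)) * (Pf n * alt n β (fun i => X i ^ 2)) := by
  unfold alt
  rw [Finset.mul_sum, Finset.mul_sum]
  refine Finset.sum_congr rfl ?_
  intro ρ _
  rw [charSum_odd hn _ (fun j => by rw [hab]; omega)]
  rw [mul_smul_comm, mul_smul_comm]
  congr 2
  have hfac : ∀ i : Fin n, (X (ρ i) ^ (α i) : Rn n)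
      = X (ρ i) * (X (ρ i) ^ 2) ^ (β i) := by
    intro i
    rw [hab, ← pow_mul, pow_succ, mul_comm]
  rw [Finset.prod_congr rfl (fun i _ => hfac i), Finset.prod_mul_distrib]
  congr 1
  rw [Pf]
  exact Equiv.prod_comp ρ (fun i => (X i : Rn n))

lemma numer_mixed {n : ℕ} (α : Fin n → ℕ) (i0 j0 : Fin n)
    (hmix : α i0 % 2 ≠ α j0 % 2) :
    (∑ ρ : Equiv.Perm (Fin n), ((Equiv.Perm.sign ρ : ℤ)) •
        (C (charSum n (fun j => α (ρ.symm j))) * ∏ i, X (ρ i) ^ (α i)) : Rn n) = 0 := by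
  refine Finset.sum_eq_zero ?_
  intro ρ _
  have hcs : charSum n (fun j => α (ρ.symm j)) = 0 := by
    have h0 : α (ρ.symm (ρ i0)) = α i0 := by rw [Equiv.symm_apply_apply]
    have h1 : α (ρ.symm (ρ j0)) = α j0 := by rw [Equiv.symm_apply_apply]
    rcases Nat.mod_two_eq_zero_or_one (α i0) with h | h
    · have h' : α j0 % 2 = 1 := by omega
      exact charSum_mixed _ (ρ j0) (ρ i0) (by simpa [h1]) (by simpa [h0])
    · have h' : α j0 % 2 = 0 := by omega
      exact charSum_mixed _ (ρ i0) (ρ j0) (by simpa [h0]) (by simpa [h1])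
  rw [hcs]
  simp

lemma toK_C_neg_one_pow {n : ℕ} (D : ℕ) :
    toK ((C ((-1 : ℚ) ^ D) : Rn n)) = (-1 : Kn n) ^ D := by
  have h1 : (C ((-1 : ℚ) ^ D) : Rn n) = (-1) ^ D := by
    rw [map_pow, map_neg, map_one]
  rw [h1]
  show algebraMap (Rn n) (Kn n) ((-1) ^ D) = _
  rw [map_pow, map_neg, map_one]

lemma toK_C_two_pow {n : ℕ} (k : ℕ) :
    toK ((C ((2 : ℚ) ^ k) : Rn n)) = (2 : Kn n) ^ k := by
  have h1 : (C ((2 : ℚ) ^ k) : Rn n) = 2 ^ k := by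
    rw [map_pow, map_ofNat]
  rw [h1]
  show algebraMap (Rn n) (Kn n) (2 ^ k) = _
  rw [map_pow, map_ofNat]

lemma final_div {K : Type*} [Field K] (u t N B : K) (hu : u * u = 1) :
    (t * N) / (u * B) = u * t * (N / B) := by
  have hinv : u⁻¹ = u := by
    rw [inv_eq_of_mul_eq_one_right hu]
  rw [div_eq_mul_inv, div_eq_mul_inv, mul_inv, hinv]
  ring

lemma final_div' {K : Type*} [Field K] (u t P N B : K) (hu : u * u = 1) :
    (t * (P * N)) / (u * B) = u * t * P * (N / B) := by
  have hinv : u⁻¹ = u := by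
    rw [inv_eq_of_mul_eq_one_right hu]
  rw [div_eq_mul_inv, div_eq_mul_inv, mul_inv, hinv]
  ring

end Stmt7

open Stmt7

/-- for a partition `λ` with at most `n` parts, with
`δ_n = (n−1,…,1,0)`:
(1) if the `λ_i + (n−1−i)` are of mixed parity then `∫ s_λ = 0`;
(2) if `λ = 2π + δ_n` for a partition `π` then
    `∫ s_λ = (−1)^{n(n−1)/2} 2^{n−1} s_π(x_1²,…,x_n²)`;
(3) if `λ = 2π + δ_n + (1,…,1)` for a partition `π` then
    `∫ s_λ = (−1)^{n(n−1)/2} 2^{n−1} (x_1⋯x_n) s_π(x_1²,…,x_n²)`. -/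

theorem stmt_7 (n : ℕ) (hn : 2 ≤ n) (lam : Fin n → ℕ) (hlam : Antitone lam)
    (s : Rn n) (hs : toK s = schurK n lam (fun i => X i)) :
    ((¬ ∀ i j : Fin n,
        (lam i + (n - 1 - (i : ℕ))) % 2 = (lam j + (n - 1 - (j : ℕ))) % 2) →
      intD n s = 0) ∧
    (∀ π : Fin n → ℕ, Antitone π →
      (∀ i, lam i = 2 * π i + (n - 1 - (i : ℕ))) →
      intD n s = ((-1 : Kn n) ^ (n * (n - 1) / 2)) * (2 : Kn n) ^ (n - 1) *
        schurK n π (fun i => X i ^ 2)) ∧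
    (∀ π : Fin n → ℕ, Antitone π →
      (∀ i, lam i = 2 * π i + (n - 1 - (i : ℕ)) + 1) →
      intD n s = ((-1 : Kn n) ^ (n * (n - 1) / 2)) * (2 : Kn n) ^ (n - 1) *
        toK (Pf n) * schurK n π (fun i => X i ^ 2)) := by
  have hn1 : 1 ≤ n := by omega
  have hd := intD_eq lam s hs
  have hu : ((-1 : Kn n) ^ (n * (n - 1) / 2)) * ((-1 : Kn n) ^ (n * (n - 1) / 2)) = 1 := by
    rw [← mul_pow]
    norm_num
  have hden : toK (((-1 : ℚ) ^ (n * (n - 1) / 2)) •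
        alt n (fun i => n - 1 - (i : ℕ)) (fun i : Fin n => X i ^ 2))
      = ((-1 : Kn n) ^ (n * (n - 1) / 2)) *
          toK (alt n (fun i => n - 1 - (i : ℕ)) (fun i : Fin n => X i ^ 2)) := by
    rw [MvPolynomial.smul_eq_C_mul, toK_mul, toK_C_neg_one_pow]
  refine ⟨?_, ?_, ?_⟩
  · -- mixed parity
    intro hmix
    push_neg at hmix
    obtain ⟨i0, j0, hij⟩ := hmix
    rw [hd, numer_mixed (fun i => lam i + (n - 1 - (i : ℕ))) i0 j0 hij]
    have : toK (0 : Rn n) = 0 := map_zero (algebraMap (Rn n) (Kn n))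
    rw [this, zero_div]
  · -- even case
    intro π hπ hl
    have hab : ∀ i, lam i + (n - 1 - (i : ℕ)) = 2 * (π i + (n - 1 - (i : ℕ))) := by
      intro i; rw [hl i]; ring
    rw [hd, numer_even hn1 (fun i => lam i + (n - 1 - (i : ℕ))) (fun i => π i + (n - 1 - (i : ℕ))) hab]
    rw [toK_mul, toK_C_two_pow, hden]
    unfold schurK
    exact final_div _ _ _ _ hu
  · -- odd case
    intro π hπ hl
    have hab : ∀ i, lam i + (n - 1 - (i : ℕ)) = 2 * (π i + (n - 1 - (i : ℕ))) + 1 := by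
      intro i; rw [hl i]; ring
    rw [hd, numer_odd hn1 (fun i => lam i + (n - 1 - (i : ℕ))) (fun i => π i + (n - 1 - (i : ℕ))) hab]
    rw [toK_mul, toK_mul, toK_C_two_pow, hden]
    unfold schurK
    exact final_div' _ _ _ _ _ hu

end
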